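/- arXiv:1705.01193 — 3 statements merged into one kernel-verified Lean document; each statement's English description precedes it below -/
import Mathlib

section
/- Let f ∈ L¹(Ω,μ) and let f̃ be a boundary extension of f. Then for every integer i ≥ 1, ∫_{Ω_i} |f̃| dμ ≤ (p+q) · ∫_{1+Ω_i} |f̃| dμ, where 1+Ω_i = {(x+1, v) : (x,v) ∈ Ω_i}. -/
open MeasureTheory Set Filter Topology

/-- The measure `ℓ(·,v)` on `V` given by
`ℓ(dw,v) = p w v⁻¹ k(w,v) ν(dw) + q δ_v(dw)`. -/
noncomputable def ell (p q : ℝ) (k : ℝ → ℝ → ℝ) (ν : Measure ℝ) (V : Set ℝ) (v : ℝ) :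
    Measure ℝ :=
  (ν.restrict V).withDensity (fun w => ENNReal.ofReal (p * w * v⁻¹ * k w v)) +
    (ENNReal.ofReal q) • Measure.dirac v

/-- The sets `Ω₀ = Ω = (0,1) × V` and, for `i ≥ 1`,
`Ω_i = {(x,v) : v ∈ V, −i v b⁻¹ < x ≤ −(i−1) v b⁻¹}`. -/
def Omi (b : ℝ) (V : Set ℝ) : ℕ → Set (ℝ × ℝ)
  | 0 => (Set.Ioo (0 : ℝ) 1) ×ˢ V
  | (i + 1) =>
      {z : ℝ × ℝ | z.2 ∈ V ∧ -(((i : ℝ) + 1) * z.2 * b⁻¹) < z.1 ∧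
        z.1 ≤ -((i : ℝ) * z.2 * b⁻¹)}

/-- `Γ_j = ⋃_{i=0}^{j} Ω_i`. -/
def Gam (b : ℝ) (V : Set ℝ) (j : ℕ) : Set (ℝ × ℝ) :=
  ⋃ i ∈ Finset.range (j + 1), Omi b V i

/-- A measurable function `f̃ : Ω̃ → ℝ` (modelled on all of `ℝ × ℝ`, with
`Ω̃ = (−∞,1) × V`), μ-integrable on each `Γ_j`, is a boundary extension of `f` if
`f̃ = f` a.e. on `{x > 0}` and, a.e. on `{x ≤ 0}`, the function
`w ↦ f̃(1 + x w v⁻¹, w)` is `ℓ(·,v)`-integrable with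
`f̃(x,v) = ∫_V f̃(1 + x w v⁻¹, w) ℓ(dw,v)`. -/
def IsBoundaryExtension (b p q : ℝ) (k : ℝ → ℝ → ℝ) (ν : Measure ℝ) (V : Set ℝ)
    (f ftil : ℝ × ℝ → ℝ) : Prop :=
  Measurable ftil ∧
  (∀ j : ℕ, IntegrableOn ftil (Gam b V j) ((volume : Measure ℝ).prod ν)) ∧
  (∀ᵐ z ∂(((volume : Measure ℝ).prod ν).restrict ((Set.Iio (1 : ℝ)) ×ˢ V)),
    0 < z.1 → ftil z = f z) ∧
  (∀ᵐ z ∂(((volume : Measure ℝ).prod ν).restrict ((Set.Iio (1 : ℝ)) ×ˢ V)),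
    z.1 ≤ 0 →
      Integrable (fun w => ftil (1 + z.1 * w * z.2⁻¹, w)) (ell p q k ν V z.2) ∧
      ftil z = ∫ w, ftil (1 + z.1 * w * z.2⁻¹, w) ∂(ell p q k ν V z.2))


section AuxLemmas
open ENNReal

/-- slice lemma -/
lemma slice_lintegral (ν : Measure ℝ) [SigmaFinite ν] (V : Set ℝ) (hVm : MeasurableSet V)
    (α β : ℝ → ℝ) (hα : Measurable α) (hβ : Measurable β)
    (G : ℝ × ℝ → ℝ≥0∞) (hG : Measurable G) :
    ∫⁻ z in {z : ℝ × ℝ | z.2 ∈ V ∧ z.1 ∈ Set.Ioc (α z.2) (β z.2)}, G z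
        ∂((volume : Measure ℝ).prod ν)
      = ∫⁻ v in V, ∫⁻ x in Set.Ioc (α v) (β v), G (x, v) ∂volume ∂ν := by
  have hW : MeasurableSet {z : ℝ × ℝ | z.2 ∈ V ∧ z.1 ∈ Set.Ioc (α z.2) (β z.2)} := by
    apply MeasurableSet.inter (measurable_snd hVm)
    exact MeasurableSet.inter
      (measurableSet_lt (hα.comp measurable_snd) measurable_fst)
      (measurableSet_le measurable_fst (hβ.comp measurable_snd))
  rw [← lintegral_indicator hW, lintegral_prod_symm' _ (hG.indicator hW)]
  rw [← lintegral_indicator hVm]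
  congr 1
  funext v
  by_cases hv : v ∈ V
  · rw [Set.indicator_of_mem hv, ← lintegral_indicator measurableSet_Ioc]
    congr 1; funext x
    by_cases hx : x ∈ Set.Ioc (α v) (β v)
    · rw [Set.indicator_of_mem hx, Set.indicator_of_mem (by exact ⟨hv, hx⟩)]
    · rw [Set.indicator_of_notMem hx, Set.indicator_of_notMem (fun h => hx h.2)]
  · rw [Set.indicator_of_notMem hv]
    have : ∀ x : ℝ, Set.indicator {z : ℝ × ℝ | z.2 ∈ V ∧ z.1 ∈ Set.Ioc (α z.2) (β z.2)} G (x, v) = 0 := by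
      intro x; exact Set.indicator_of_notMem (fun h => hv h.1) _
    simp only [Set.mem_Ioc] at this
    simp [this]

/-- change of variables x ↦ c x + 1 -/
lemma cov_lintegral (c : ℝ) (hc : 0 < c) (h : ℝ → ℝ≥0∞) (hh : Measurable h) (s : Set ℝ) :
    ENNReal.ofReal c * ∫⁻ x in s, h (c * x + 1) ∂volume
      = ∫⁻ y in (fun x => c * x + 1) '' s, h y ∂volume := by
  have hc0 : c ≠ 0 := ne_of_gt hc
  have hφ : MeasurePreserving (fun x : ℝ => c * x + 1)
      (ENNReal.ofReal c • (volume : Measure ℝ)) volume := by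
    constructor
    · exact (measurable_const_mul c).add_const 1
    · rw [Measure.map_smul]
      have : (fun x : ℝ => c * x + 1) = (fun x : ℝ => x + 1) ∘ (fun x => c * x) := rfl
      rw [this, ← Measure.map_map (measurable_add_const 1) (measurable_const_mul c),
        Real.map_volume_mul_left hc0, Measure.map_smul,
        map_add_right_eq_self volume 1, smul_smul, abs_of_pos (inv_pos.2 hc),
        ← ENNReal.ofReal_mul hc.le, mul_inv_cancel₀ hc0, ENNReal.ofReal_one, one_smul]
  have hemb : MeasurableEmbedding (fun x : ℝ => c * x + 1) := by
    have : (fun x : ℝ => c * x + 1) = ⇑(affineHomeomorph c 1 hc0) := by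
      funext x; simp [affineHomeomorph]
    rw [this]; exact (affineHomeomorph c 1 hc0).measurableEmbedding
  have := hφ.setLIntegral_comp_emb hemb h s
  rw [Measure.restrict_smul, lintegral_smul_measure] at this
  exact this

lemma image_affine_Ioc (c : ℝ) (hc : 0 < c) (u t : ℝ) :
    (fun x => c * x + 1) '' Set.Ioc u t = Set.Ioc (c * u + 1) (c * t + 1) := by
  ext y
  constructor
  · rintro ⟨x, ⟨hx1, hx2⟩, rfl⟩
    simp only [Set.mem_Ioc]
    exact ⟨by nlinarith, by nlinarith⟩
  · rintro ⟨h1, h2⟩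
    refine ⟨(y - 1) / c, ⟨?_, ?_⟩, ?_⟩
    · rw [lt_div_iff₀ hc]; nlinarith
    · rw [div_le_iff₀ hc]; nlinarith
    · field_simp; ring

end AuxLemmas

open ENNReal in
theorem stmt1
    (a b p q : ℝ) (ha : 0 ≤ a) (hab : a < b)
    (hp : 0 ≤ p) (hq : 0 ≤ q) (hpq : 0 < p + q)
    (V : Set ℝ) (hV : V ⊆ Set.Ioo a b) (hVm : MeasurableSet V)
    (ν : Measure ℝ) [SigmaFinite ν]
    (k : ℝ → ℝ → ℝ) (hkm : Measurable (Function.uncurry k))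
    (hknn : ∀ w v : ℝ, 0 ≤ k w v)
    (hk1 : ∀ w ∈ V, ∫ v in V, k w v ∂ν = 1)
    (f ftil : ℝ × ℝ → ℝ)
    (hf : IntegrableOn f ((Set.Ioo (0 : ℝ) 1) ×ˢ V) ((volume : Measure ℝ).prod ν))
    (hext : IsBoundaryExtension b p q k ν V f ftil)
    (i : ℕ) (hi : 1 ≤ i) :
    ∫ z in Omi b V i, |ftil z| ∂((volume : Measure ℝ).prod ν)
      ≤ (p + q) *
        ∫ z in (fun z : ℝ × ℝ => (z.1 + 1, z.2)) '' (Omi b V i), |ftil z|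
          ∂((volume : Measure ℝ).prod ν) := by
  obtain ⟨hmf, hGamInt, hpos, hbd⟩ := hext
  obtain ⟨j, rfl⟩ : ∃ j, i = j + 1 := ⟨i - 1, (Nat.succ_pred_eq_of_pos hi).symm⟩
  set μ := (volume : Measure ℝ).prod ν with hμ
  have hb : 0 < b := lt_of_le_of_lt ha hab
  have hb0 : b ≠ 0 := ne_of_gt hb
  have hVpos : ∀ v ∈ V, 0 < v := fun v hv => lt_of_le_of_lt ha (hV hv).1
  have hVlt : ∀ v ∈ V, v < b := fun v hv => (hV hv).2
  set α : ℝ → ℝ := fun v => -(((j : ℝ) + 1) * v * b⁻¹) with hα_def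
  set β : ℝ → ℝ := fun v => -((j : ℝ) * v * b⁻¹) with hβ_def
  have hαm : Measurable α := by fun_prop
  have hβm : Measurable β := by fun_prop
  set S : Set (ℝ × ℝ) := Omi b V (j + 1) with hS_def
  set T : ℝ × ℝ → ℝ × ℝ := fun z => (z.1 + 1, z.2) with hT_def
  have hSeq : S = {z : ℝ × ℝ | z.2 ∈ V ∧ z.1 ∈ Set.Ioc (α z.2) (β z.2)} := by
    ext z; simp [hS_def, Omi, Set.mem_Ioc, hα_def, hβ_def]
  have hS'eq : T '' S = {z : ℝ × ℝ | z.2 ∈ V ∧ z.1 ∈ Set.Ioc (α z.2 + 1) (β z.2 + 1)} := by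
    ext z
    constructor
    · rintro ⟨w, hw, rfl⟩
      rw [hSeq] at hw
      obtain ⟨hw1, hw2, hw3⟩ := hw
      exact ⟨hw1, by show α w.2 + 1 < w.1 + 1; linarith, by show w.1 + 1 ≤ β w.2 + 1; linarith⟩
    · rintro ⟨hv, h1, h2⟩
      refine ⟨(z.1 - 1, z.2), ?_, ?_⟩
      · rw [hSeq]; exact ⟨hv, by simp; linarith, by simp; linarith⟩
      · simp [hT_def]
  have hSm : MeasurableSet S := by
    rw [hSeq]
    exact (measurable_snd hVm).inter (MeasurableSet.inter
      (measurableSet_lt (hαm.comp measurable_snd) measurable_fst)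
      (measurableSet_le measurable_fst (hβm.comp measurable_snd)))
  have hS'm : MeasurableSet (T '' S) := by
    rw [hS'eq]
    exact (measurable_snd hVm).inter (MeasurableSet.inter
      (measurableSet_lt ((hαm.add_const 1).comp measurable_snd) measurable_fst)
      (measurableSet_le measurable_fst ((hβm.add_const 1).comp measurable_snd)))
  -- integrability
  have hSsub : S ⊆ Gam b V (j + 1) := by
    intro z hz
    simp only [Gam, Set.mem_iUnion]
    exact ⟨j + 1, Finset.mem_range.2 (Nat.lt_succ_self _), hz⟩
  have hIntS : IntegrableOn ftil S μ := (hGamInt (j + 1)).mono_set hSsub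
  have hnull : μ {z : ℝ × ℝ | z.1 = 1} = 0 := by
    have : {z : ℝ × ℝ | z.1 = 1} = ({1} : Set ℝ) ×ˢ (Set.univ : Set ℝ) := by
      ext z
      simp only [Set.mem_setOf_eq, Set.mem_prod, Set.mem_singleton_iff, Set.mem_univ, and_true]
    rw [this, hμ, Measure.prod_prod]
    simp
  have hβnp : ∀ v ∈ V, β v ≤ 0 := by
    intro v hv
    have hv0 : 0 < v := hVpos _ hv
    simp only [hβ_def, neg_nonpos]
    positivity
  have hS'sub : T '' S ⊆ Gam b V (j + 1) ∪ {z : ℝ × ℝ | z.1 = 1} := by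
    intro z hz
    rw [hS'eq] at hz
    obtain ⟨hv, h1, h2⟩ := hz
    have hv0 : 0 < z.2 := hVpos _ hv
    have hvb : z.2 < b := hVlt _ hv
    have hbinv : 0 < b⁻¹ := inv_pos.2 hb
    by_cases h1eq : z.1 = 1
    · exact Or.inr h1eq
    · left
      have hlt1 : z.1 < 1 := lt_of_le_of_ne (le_trans h2 (by linarith [hβnp _ hv])) h1eq
      by_cases h0 : 0 < z.1
      · simp only [Gam, Set.mem_iUnion]
        refine ⟨0, Finset.mem_range.2 (by omega), ?_⟩
        exact ⟨⟨h0, hlt1⟩, hv⟩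
      · push_neg at h0
        set t : ℝ := (-z.1) * b / z.2 with ht_def
        have hz1 : 0 ≤ -z.1 := neg_nonneg.2 h0
        have ht0 : 0 ≤ t := by rw [ht_def]; positivity
        have htlt : t < (j : ℝ) + 1 := by
          rw [ht_def, div_lt_iff₀ hv0]
          have : -z.1 < ((j : ℝ) + 1) * z.2 * b⁻¹ := by
            simp only [hα_def] at h1; linarith
          calc -z.1 * b < (((j : ℝ) + 1) * z.2 * b⁻¹) * b := by
                exact mul_lt_mul_of_pos_right this hb
            _ = ((j : ℝ) + 1) * z.2 := by field_simp
        set m : ℕ := ⌊t⌋₊ with hm_def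
        have hmle : m ≤ j := by
          have : m < j + 1 := by
            rw [hm_def]
            exact_mod_cast (Nat.floor_lt ht0).2 (by exact_mod_cast htlt)
          omega
        have hub : (m : ℝ) * z.2 ≤ -z.1 * b := by
          have := Nat.floor_le ht0
          rw [← hm_def, ht_def, le_div_iff₀ hv0] at this
          linarith
        have hlb : -z.1 * b < ((m : ℝ) + 1) * z.2 := by
          have := Nat.lt_floor_add_one t
          rw [← hm_def, ht_def, div_lt_iff₀ hv0] at this
          linarith
        simp only [Gam, Set.mem_iUnion]
        refine ⟨m + 1, Finset.mem_range.2 (by omega), ?_⟩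
        refine ⟨hv, ?_, ?_⟩
        · have : -z.1 < ((m : ℝ) + 1) * z.2 * b⁻¹ := by
            have := mul_lt_mul_of_pos_right hlb hbinv
            calc -z.1 = -z.1 * b * b⁻¹ := by field_simp
              _ < ((m : ℝ) + 1) * z.2 * b⁻¹ := this
          linarith
        · have : (m : ℝ) * z.2 * b⁻¹ ≤ -z.1 := by
            have := mul_le_mul_of_nonneg_right hub hbinv.le
            calc (m : ℝ) * z.2 * b⁻¹ ≤ -z.1 * b * b⁻¹ := this
              _ = -z.1 := by field_simp
          linarith
  have hIntS' : IntegrableOn ftil (T '' S) μ := by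
    have hnull2 : μ (T '' S \ Gam b V (j + 1)) = 0 := by
      refine measure_mono_null ?_ hnull
      intro z hz
      rcases hS'sub hz.1 with h | h
      · exact absurd h hz.2
      · exact h
    have h2 : IntegrableOn ftil (T '' S \ Gam b V (j + 1)) μ := by
      unfold IntegrableOn
      rw [Measure.restrict_eq_zero.2 hnull2]
      exact integrable_zero_measure
    have h1 : IntegrableOn ftil (T '' S ∩ Gam b V (j + 1)) μ :=
      (hGamInt (j + 1)).mono_set Set.inter_subset_right
    refine (h1.union h2).mono_set ?_
    intro z hz
    by_cases hg : z ∈ Gam b V (j + 1)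
    · exact Or.inl ⟨hz, hg⟩
    · exact Or.inr ⟨hz, hg⟩
  -- the nonnegative integrand
  set g : ℝ × ℝ → ℝ≥0∞ := fun z => ENNReal.ofReal |ftil z| with hg_def
  have hgm : Measurable g := ENNReal.measurable_ofReal.comp hmf.abs
  set L1 : ℝ≥0∞ := ∫⁻ z in S, g z ∂μ with hL1_def
  set L2 : ℝ≥0∞ := ∫⁻ z in T '' S, g z ∂μ with hL2_def
  have hgnorm : ∀ z, g z = (‖ftil z‖₊ : ℝ≥0∞) := fun z => by
    rw [hg_def, ← enorm_eq_nnnorm, ← ofReal_norm, Real.norm_eq_abs]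
  have hL2top : L2 ≠ ⊤ := by
    have := hIntS'.hasFiniteIntegral
    rw [HasFiniteIntegral] at this
    rw [hL2_def]
    simp_rw [hgnorm]
    exact this.ne
  have hL1top : L1 ≠ ⊤ := by
    have := hIntS.hasFiniteIntegral
    rw [HasFiniteIntegral] at this
    rw [hL1_def]
    simp_rw [hgnorm]
    exact this.ne
  -- the P function
  set P : ℝ × ℝ → ℝ≥0∞ := fun z =>
    ∫⁻ w in V, ENNReal.ofReal (p * w * z.2⁻¹ * k w z.2) * g (1 + z.1 * w * z.2⁻¹, w) ∂ν
    with hP_def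
  have hPm : Measurable P := by
    have : Measurable (fun zw : (ℝ × ℝ) × ℝ =>
        ENNReal.ofReal (p * zw.2 * zw.1.2⁻¹ * k zw.2 zw.1.2) *
          g (1 + zw.1.1 * zw.2 * zw.1.2⁻¹, zw.2)) := by
      have hh1 : Measurable (fun zw : (ℝ × ℝ) × ℝ => (zw.2, zw.1.2)) := by fun_prop
      have hh2 : Measurable (fun zw : (ℝ × ℝ) × ℝ =>
          (1 + zw.1.1 * zw.2 * zw.1.2⁻¹, zw.2)) := by fun_prop
      refine Measurable.mul (f := fun zw : (ℝ × ℝ) × ℝ =>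
        ENNReal.ofReal (p * zw.2 * zw.1.2⁻¹ * k zw.2 zw.1.2)) ?_ ?_
      · apply ENNReal.measurable_ofReal.comp
        apply Measurable.mul
        · fun_prop
        · exact hkm.comp hh1
      · exact hgm.comp hh2
    exact Measurable.lintegral_prod_right this
  -- key pointwise a.e. inequality
  have hSsub1 : S ⊆ (Set.Iio (1 : ℝ)) ×ˢ V := by
    rw [hSeq]
    rintro z ⟨hv, _, h2⟩
    exact ⟨lt_of_le_of_lt h2 (lt_of_le_of_lt (hβnp _ hv) one_pos), hv⟩
  have hbd' : ∀ᵐ z ∂(μ.restrict S), z.1 ≤ 0 →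
      Integrable (fun w => ftil (1 + z.1 * w * z.2⁻¹, w)) (ell p q k ν V z.2) ∧
      ftil z = ∫ w, ftil (1 + z.1 * w * z.2⁻¹, w) ∂(ell p q k ν V z.2) :=
    ae_restrict_of_ae_restrict_of_subset hSsub1 hbd
  have hmem : ∀ᵐ z ∂(μ.restrict S), z ∈ S := ae_restrict_mem hSm
  have key : ∀ᵐ z ∂(μ.restrict S), g z ≤ P z + ENNReal.ofReal q * g (z.1 + 1, z.2) := by
    filter_upwards [hbd', hmem] with z hz hzS
    have hzS' := hzS
    rw [hSeq] at hzS'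
    obtain ⟨hv, hx1, hx2⟩ := hzS'
    have hv0 : 0 < z.2 := hVpos _ hv
    have hvne : z.2 ≠ 0 := ne_of_gt hv0
    have hx0 : z.1 ≤ 0 := le_trans hx2 (hβnp _ hv)
    obtain ⟨hint, heq⟩ := hz hx0
    have hGm : Measurable (fun w => ENNReal.ofReal |ftil (1 + z.1 * w * z.2⁻¹, w)|) := by
      apply ENNReal.measurable_ofReal.comp
      apply Measurable.abs
      exact hmf.comp (by fun_prop)
    have hDm : Measurable (fun w => ENNReal.ofReal (p * w * z.2⁻¹ * k w z.2)) := by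
      apply ENNReal.measurable_ofReal.comp
      apply Measurable.mul
      · fun_prop
      · exact hkm.comp (measurable_id.prodMk measurable_const)
    have step1 : g z ≤ ∫⁻ w, ENNReal.ofReal |ftil (1 + z.1 * w * z.2⁻¹, w)| ∂(ell p q k ν V z.2) := by
      rw [hg_def]
      calc ENNReal.ofReal |ftil z|
          = ENNReal.ofReal |∫ w, ftil (1 + z.1 * w * z.2⁻¹, w) ∂(ell p q k ν V z.2)| := by
            rw [← heq]
        _ ≤ ENNReal.ofReal (∫ w, |ftil (1 + z.1 * w * z.2⁻¹, w)| ∂(ell p q k ν V z.2)) := by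
            apply ENNReal.ofReal_le_ofReal
            simpa [Real.norm_eq_abs] using
              norm_integral_le_integral_norm (μ := ell p q k ν V z.2)
                (fun w => ftil (1 + z.1 * w * z.2⁻¹, w))
        _ = ∫⁻ w, ENNReal.ofReal |ftil (1 + z.1 * w * z.2⁻¹, w)| ∂(ell p q k ν V z.2) :=
            ofReal_integral_eq_lintegral_ofReal hint.abs (ae_of_all _ fun w => abs_nonneg _)
    have step2 : ∫⁻ w, ENNReal.ofReal |ftil (1 + z.1 * w * z.2⁻¹, w)| ∂(ell p q k ν V z.2)
        = P z + ENNReal.ofReal q * g (z.1 + 1, z.2) := by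
      rw [ell, lintegral_add_measure, lintegral_smul_measure, lintegral_dirac' _ hGm,
        lintegral_withDensity_eq_lintegral_mul _ hDm hGm]
      congr 1
      simp only [hg_def]
      rw [mul_inv_cancel_right₀ hvne, add_comm]
      exact smul_eq_mul _ _
    exact step2 ▸ step1
  -- translation invariance for the q-term
  have hTpres : MeasurePreserving T μ μ := by
    have := (measurePreserving_add_right (volume : Measure ℝ) 1).prod (MeasurePreserving.id ν)
    exact this
  have hTemb : MeasurableEmbedding T := by
    have h1 : MeasurableEmbedding (fun x : ℝ => x + 1) :=
      (Homeomorph.addRight (1 : ℝ)).measurableEmbedding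
    exact h1.prodMap (MeasurableEmbedding.id (α := ℝ))
  have hQtrans : ∫⁻ z in S, g (T z) ∂μ = L2 := by
    rw [hL2_def]
    exact hTpres.setLIntegral_comp_emb hTemb g S
  have hstep : L1 ≤ ∫⁻ z in S, P z ∂μ + ENNReal.ofReal q * L2 := by
    calc L1 ≤ ∫⁻ z in S, (P z + ENNReal.ofReal q * g (T z)) ∂μ := lintegral_mono_ae key
      _ = ∫⁻ z in S, P z ∂μ + ∫⁻ z in S, ENNReal.ofReal q * g (T z) ∂μ :=
          lintegral_add_left hPm _
      _ = ∫⁻ z in S, P z ∂μ + ENNReal.ofReal q * ∫⁻ z in S, g (T z) ∂μ := by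
          rw [lintegral_const_mul' _ _ ENNReal.ofReal_ne_top]
      _ = ∫⁻ z in S, P z ∂μ + ENNReal.ofReal q * L2 := by rw [hQtrans]
  -- the function A
  set A : ℝ → ℝ≥0∞ := fun w => ∫⁻ y in Set.Ioc (α w + 1) (β w + 1), g (y, w) ∂volume
    with hA_def
  have hAm : Measurable A := by
    have hsetm : MeasurableSet {r : ℝ × ℝ | r.2 ∈ Set.Ioc (α r.1 + 1) (β r.1 + 1)} :=
      MeasurableSet.inter
        (measurableSet_lt ((hαm.add_const 1).comp measurable_fst) measurable_snd)
        (measurableSet_le measurable_snd ((hβm.add_const 1).comp measurable_fst))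
    have hAum : Measurable (fun r : ℝ × ℝ =>
        Set.indicator {r : ℝ × ℝ | r.2 ∈ Set.Ioc (α r.1 + 1) (β r.1 + 1)}
          (fun r : ℝ × ℝ => g (r.2, r.1)) r) :=
      Measurable.indicator (hgm.comp (by fun_prop)) hsetm
    have hAeq : A = fun w => ∫⁻ y, Set.indicator {r : ℝ × ℝ | r.2 ∈ Set.Ioc (α r.1 + 1) (β r.1 + 1)}
        (fun r : ℝ × ℝ => g (r.2, r.1)) (w, y) ∂volume := by
      funext w
      rw [hA_def]
      simp only
      rw [← lintegral_indicator measurableSet_Ioc]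
      refine lintegral_congr fun y => ?_
      by_cases hy : y ∈ Set.Ioc (α w + 1) (β w + 1)
      · rw [Set.indicator_of_mem hy, Set.indicator_of_mem (by exact hy)]
      · rw [Set.indicator_of_notMem hy, Set.indicator_of_notMem (by exact hy)]
    rw [hAeq]
    exact Measurable.lintegral_prod_right hAum
  have hL2slice : L2 = ∫⁻ w in V, A w ∂ν := by
    rw [hL2_def, hS'eq]
    exact slice_lintegral ν V hVm (fun v => α v + 1) (fun v => β v + 1)
      (hαm.add_const 1) (hβm.add_const 1) g hgm
  -- P-term computation
  have hPterm : ∫⁻ z in S, P z ∂μ = ENNReal.ofReal p * L2 := by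
    rw [hSeq, slice_lintegral ν V hVm α β hαm hβm P hPm]
    have hinner : ∀ v ∈ V, ∫⁻ x in Set.Ioc (α v) (β v), P (x, v) ∂volume
        = ∫⁻ w in V, (ENNReal.ofReal p * ENNReal.ofReal (k w v)) * A w ∂ν := by
      intro v hv
      have hv0 : 0 < v := hVpos _ hv
      have hvne : v ≠ 0 := ne_of_gt hv0
      have hswap : ∫⁻ x in Set.Ioc (α v) (β v), P (x, v) ∂volume
          = ∫⁻ w in V, ∫⁻ x in Set.Ioc (α v) (β v),
              ENNReal.ofReal (p * w * v⁻¹ * k w v) * g (1 + x * w * v⁻¹, w) ∂volume ∂ν := by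
        simp only [hP_def]
        refine lintegral_lintegral_swap ?_
        apply Measurable.aemeasurable
        have hh1 : Measurable (fun xw : ℝ × ℝ => (xw.2, v)) := by fun_prop
        have hh2 : Measurable (fun xw : ℝ × ℝ => (1 + xw.1 * xw.2 * v⁻¹, xw.2)) := by fun_prop
        refine Measurable.mul (f := fun xw : ℝ × ℝ =>
          ENNReal.ofReal (p * xw.2 * v⁻¹ * k xw.2 v)) ?_ ?_
        · apply ENNReal.measurable_ofReal.comp
          apply Measurable.mul
          · fun_prop
          · exact hkm.comp hh1
        · exact hgm.comp hh2
      rw [hswap]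
      refine setLIntegral_congr_fun hVm (fun w hw => ?_)
      have hw0 : 0 < w := hVpos _ hw
      have hwne : w ≠ 0 := ne_of_gt hw0
      set c : ℝ := w * v⁻¹ with hc_def
      have hc : 0 < c := by positivity
      rw [lintegral_const_mul' _ _ ENNReal.ofReal_ne_top]
      have hrw : ∫⁻ x in Set.Ioc (α v) (β v), g (1 + x * w * v⁻¹, w) ∂volume
          = ∫⁻ x in Set.Ioc (α v) (β v), (fun y => g (y, w)) (c * x + 1) ∂volume := by
        congr 1
        funext x
        have : (1 + x * w * v⁻¹ : ℝ) = c * x + 1 := by rw [hc_def]; ring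
        rw [this]
      rw [hrw]
      have hgwm : Measurable (fun y => g (y, w)) := hgm.comp (by fun_prop)
      have hcov := cov_lintegral c hc (fun y => g (y, w)) hgwm (Set.Ioc (α v) (β v))
      rw [image_affine_Ioc c hc] at hcov
      have he1 : c * α v + 1 = α w + 1 := by
        simp only [hc_def, hα_def]
        field_simp
      have he2 : c * β v + 1 = β w + 1 := by
        simp only [hc_def, hβ_def]
        field_simp
      rw [he1, he2] at hcov
      rw [hA_def]
      simp only
      rw [← hcov]
      have hcomb : ENNReal.ofReal (p * w * v⁻¹ * k w v)
          = ENNReal.ofReal p * ENNReal.ofReal (k w v) * ENNReal.ofReal c := by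
        rw [← ENNReal.ofReal_mul hp, ← ENNReal.ofReal_mul (mul_nonneg hp (hknn w v))]
        congr 1
        rw [hc_def]
        field_simp
      rw [hcomb]
      ring
    rw [setLIntegral_congr_fun hVm hinner]
    have hswap2 : ∫⁻ v in V, ∫⁻ w in V, (ENNReal.ofReal p * ENNReal.ofReal (k w v)) * A w ∂ν ∂ν
        = ∫⁻ w in V, ∫⁻ v in V, (ENNReal.ofReal p * ENNReal.ofReal (k w v)) * A w ∂ν ∂ν := by
      refine lintegral_lintegral_swap ?_
      apply Measurable.aemeasurable
      have hh1 : Measurable (fun vw : ℝ × ℝ => (vw.2, vw.1)) := by fun_prop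
      refine Measurable.mul (f := fun vw : ℝ × ℝ =>
        ENNReal.ofReal p * ENNReal.ofReal (k vw.2 vw.1)) ?_ ?_
      · exact (measurable_const.mul (ENNReal.measurable_ofReal.comp (hkm.comp hh1)))
      · exact hAm.comp measurable_snd
    rw [hswap2]
    have hwfix : ∀ w ∈ V, ∫⁻ v in V, (ENNReal.ofReal p * ENNReal.ofReal (k w v)) * A w ∂ν
        = ENNReal.ofReal p * A w := by
      intro w hw
      have hki : Integrable (fun v => k w v) (ν.restrict V) :=
        integrable_of_integral_eq_one (hk1 w hw)
      have hk1' : ∫⁻ v in V, ENNReal.ofReal (k w v) ∂ν = 1 := by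
        have h := ofReal_integral_eq_lintegral_ofReal hki (ae_of_all _ fun v => hknn w v)
        rw [hk1 w hw, ENNReal.ofReal_one] at h
        exact h.symm
      have hkwm : Measurable (fun v => ENNReal.ofReal (k w v)) :=
        ENNReal.measurable_ofReal.comp (hkm.comp (measurable_const.prodMk measurable_id))
      calc ∫⁻ v in V, (ENNReal.ofReal p * ENNReal.ofReal (k w v)) * A w ∂ν
          = ∫⁻ v in V, (ENNReal.ofReal p * A w) * ENNReal.ofReal (k w v) ∂ν := by
            congr 1; funext v; ring
        _ = (ENNReal.ofReal p * A w) * ∫⁻ v in V, ENNReal.ofReal (k w v) ∂ν :=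
            lintegral_const_mul _ hkwm
        _ = ENNReal.ofReal p * A w := by rw [hk1', mul_one]
    rw [setLIntegral_congr_fun hVm hwfix,
      lintegral_const_mul' _ _ ENNReal.ofReal_ne_top, ← hL2slice]
  -- final assembly
  have hmain : L1 ≤ ENNReal.ofReal (p + q) * L2 := by
    rw [ENNReal.ofReal_add hp hq, add_mul]
    calc L1 ≤ ∫⁻ z in S, P z ∂μ + ENNReal.ofReal q * L2 := hstep
      _ = ENNReal.ofReal p * L2 + ENNReal.ofReal q * L2 := by rw [hPterm]
  have hI1 : ∫ z in S, |ftil z| ∂μ = L1.toReal := by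
    rw [hL1_def]
    exact integral_eq_lintegral_of_nonneg_ae (ae_of_all _ fun z => abs_nonneg _)
      (hmf.abs.aestronglyMeasurable)
  have hI2 : ∫ z in T '' S, |ftil z| ∂μ = L2.toReal := by
    rw [hL2_def]
    exact integral_eq_lintegral_of_nonneg_ae (ae_of_all _ fun z => abs_nonneg _)
      (hmf.abs.aestronglyMeasurable)
  rw [hI1, hI2]
  have hrhs : (p + q) * L2.toReal = (ENNReal.ofReal (p + q) * L2).toReal := by
    rw [ENNReal.toReal_mul, ENNReal.toReal_ofReal hpq.le]
  rw [hrhs]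
  exact ENNReal.toReal_mono (ENNReal.mul_ne_top ENNReal.ofReal_ne_top hL2top) hmain
end

section
/- Let f ∈ L¹(Ω,μ) and let f̃ be a boundary extension of f. Then for every integer j ≥ 0, ∫_{Γ_j} |f̃| dμ ≤ ( ∑_{i=0}^{j} (p+q)^i ) · ‖f‖_{L¹(Ω)}. -/
open MeasureTheory Set Filter Topology
open scoped ENNReal

lemma lint_scale (g : ℝ → ℝ≥0∞) (hg : Measurable g) {c : ℝ} (hc : 0 < c) :
    ∫⁻ x, g (c * x) ∂(volume : Measure ℝ) = ENNReal.ofReal c⁻¹ * ∫⁻ y, g y := by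
  rw [← lintegral_map hg (measurable_const_mul c), Real.map_volume_mul_left hc.ne',
    lintegral_smul_measure, abs_of_pos (inv_pos.2 hc), smul_eq_mul]

lemma lint_shift (g : ℝ → ℝ≥0∞) (d : ℝ) :
    ∫⁻ x, g (x + d) ∂(volume : Measure ℝ) = ∫⁻ y, g y := by
  exact lintegral_add_right_eq_self g d

-- affine change of variables for restricted lintegral
lemma lint_affine (g : ℝ → ℝ≥0∞) (hg : Measurable g) {c : ℝ} (hc : 0 < c) (d : ℝ)
    {s t : Set ℝ} (hs : MeasurableSet s) (ht : MeasurableSet t)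
    (hst : ∀ x, x ∈ s ↔ c * x + d ∈ t) :
    ∫⁻ x in s, g (c * x + d) ∂volume = ENNReal.ofReal c⁻¹ * ∫⁻ y in t, g y ∂volume := by
  rw [← lintegral_indicator hs _, ← lintegral_indicator ht _]
  have h1 : ∀ x, s.indicator (fun x => g (c * x + d)) x
      = (t.indicator g) (c * x + d) := by
    intro x
    by_cases hx : x ∈ s
    · rw [Set.indicator_of_mem hx, Set.indicator_of_mem ((hst x).1 hx)]
    · rw [Set.indicator_of_notMem hx, Set.indicator_of_notMem (fun h => hx ((hst x).2 h))]
  simp_rw [h1]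
  have hG : Measurable (fun y => t.indicator g (y + d)) :=
    (hg.indicator ht).comp (measurable_add_const d)
  calc ∫⁻ x, t.indicator g (c * x + d) ∂volume
      = ∫⁻ x, (fun y => t.indicator g (y + d)) (c * x) ∂volume := rfl
    _ = ENNReal.ofReal c⁻¹ * ∫⁻ y, t.indicator g (y + d) ∂volume := lint_scale _ hG hc
    _ = ENNReal.ofReal c⁻¹ * ∫⁻ y, t.indicator g y ∂volume := by rw [lint_shift]

-- section lemma
lemma lint_section (ν : Measure ℝ) [SigmaFinite ν] (g : ℝ × ℝ → ℝ≥0∞) (hg : Measurable g)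
    {S : Set (ℝ × ℝ)} (hS : MeasurableSet S) :
    ∫⁻ z in S, g z ∂((volume : Measure ℝ).prod ν)
      = ∫⁻ v, ∫⁻ x in {x | (x, v) ∈ S}, g (x, v) ∂volume ∂ν := by
  rw [← lintegral_indicator hS _, lintegral_prod_symm _ (hg.indicator hS).aemeasurable]
  congr 1
  ext v
  have h1 : ∀ x, S.indicator g (x, v)
      = ({x | (x, v) ∈ S}).indicator (fun x => g (x, v)) x := by
    intro x
    by_cases hx : (x, v) ∈ S
    · rw [Set.indicator_of_mem hx,
        Set.indicator_of_mem (show x ∈ {x | (x, v) ∈ S} from hx)]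
    · rw [Set.indicator_of_notMem hx,
        Set.indicator_of_notMem (show x ∉ {x | (x, v) ∈ S} from hx)]
  simp_rw [h1]
  exact lintegral_indicator (measurable_prodMk_right hS) _

lemma omi_meas {b : ℝ} {V : Set ℝ} (hVm : MeasurableSet V) (i : ℕ) :
    MeasurableSet (Omi b V i) := by
  cases i with
  | zero => exact measurableSet_Ioo.prod hVm
  | succ n =>
    have : Omi b V (n+1) = (Prod.snd ⁻¹' V) ∩
        ({z : ℝ × ℝ | -(((n : ℝ) + 1) * z.2 * b⁻¹) < z.1} ∩
         {z : ℝ × ℝ | z.1 ≤ -((n : ℝ) * z.2 * b⁻¹)}) := by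
      ext z; simp [Omi, and_assoc]
    rw [this]
    refine (hVm.preimage measurable_snd).inter (MeasurableSet.inter ?_ ?_)
    · exact measurableSet_lt (by fun_prop) measurable_fst
    · exact measurableSet_le measurable_fst (by fun_prop)

lemma gam_meas {b : ℝ} {V : Set ℝ} (hVm : MeasurableSet V) (j : ℕ) :
    MeasurableSet (Gam b V j) :=
  MeasurableSet.biUnion (Finset.range (j+1)).countable_toSet
    (fun i _ => omi_meas hVm i)

lemma omi_disj {a b : ℝ} {V : Set ℝ} (ha : 0 ≤ a) (hab : a < b) (hV : V ⊆ Set.Ioo a b)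
    {i i' : ℕ} (h : i < i') : Disjoint (Omi b V i) (Omi b V i') := by
  have hb : 0 < b := lt_of_le_of_lt ha hab
  rw [Set.disjoint_left]
  intro z hz hz'
  have hvpos : 0 < z.2 := by
    rcases i' with _ | m
    · omega
    · exact lt_of_le_of_lt ha (hV hz'.1).1
  rcases i' with _ | m
  · omega
  have hle : z.1 ≤ -((m : ℝ) * z.2 * b⁻¹) := hz'.2.2
  rcases i with _ | l
  · have : (0:ℝ) < z.1 := hz.1.1
    have h2 : -((m : ℝ) * z.2 * b⁻¹) ≤ 0 := by
      have : (0:ℝ) ≤ (m : ℝ) * z.2 * b⁻¹ := by positivity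
      linarith
    linarith
  · have h1 : -(((l : ℝ) + 1) * z.2 * b⁻¹) < z.1 := hz.2.1
    have hlm : (l : ℝ) + 1 ≤ (m : ℝ) := by exact_mod_cast Nat.succ_le_of_lt (by omega)
    have : ((l:ℝ)+1) * z.2 * b⁻¹ ≤ (m:ℝ) * z.2 * b⁻¹ := by
      apply mul_le_mul_of_nonneg_right (mul_le_mul_of_nonneg_right hlm hvpos.le)
      positivity
    linarith

lemma kone {ν : Measure ℝ} {V : Set ℝ} {k : ℝ → ℝ → ℝ}
    (hkm : Measurable (Function.uncurry k)) (hknn : ∀ w v : ℝ, 0 ≤ k w v)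
    {w : ℝ} (h1 : ∫ v in V, k w v ∂ν = 1) :
    ∫⁻ v in V, ENNReal.ofReal (k w v) ∂ν = 1 := by
  have hmw : Measurable (fun v => k w v) := hkm.comp measurable_prodMk_left
  by_cases hfin : ∫⁻ v in V, ENNReal.ofReal (k w v) ∂ν = ⊤
  · exfalso
    have hni : ¬ Integrable (fun v => k w v) (ν.restrict V) := by
      intro hint
      have := hint.2
      rw [HasFiniteIntegral] at this
      have heq : ∀ v, ‖k w v‖ₑ = ENNReal.ofReal (k w v) := by
        intro v
        exact Real.enorm_eq_ofReal (hknn w v)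
      simp_rw [heq] at this
      exact absurd hfin (ne_of_lt this)
    rw [integral_undef hni] at h1
    norm_num at h1
  · have hint : Integrable (fun v => k w v) (ν.restrict V) := by
      refine ⟨hmw.aestronglyMeasurable, ?_⟩
      rw [HasFiniteIntegral]
      have heq : ∀ v, ‖k w v‖ₑ = ENNReal.ofReal (k w v) := by
        intro v
        exact Real.enorm_eq_ofReal (hknn w v)
      simp_rw [heq]
      exact lt_of_le_of_ne le_top hfin
    rw [← ofReal_integral_eq_lintegral_ofReal hint
      (Filter.Eventually.of_forall (fun v => hknn w v)), h1, ENNReal.ofReal_one]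

lemma gam_succ (b : ℝ) (V : Set ℝ) (j : ℕ) :
    Gam b V (j+1) = Gam b V j ∪ Omi b V (j+1) := by
  unfold Gam
  rw [Finset.range_add_one]
  ext z
  simp [or_comm]

lemma gam_eq {a b : ℝ} {V : Set ℝ} (ha : 0 ≤ a) (hab : a < b) (hV : V ⊆ Set.Ioo a b)
    (j : ℕ) : Gam b V j
      = {z : ℝ × ℝ | z.2 ∈ V ∧ z.1 ∈ Set.Ioc (-((j : ℝ) * z.2 * b⁻¹)) 0 ∪ Set.Ioo 0 1} := by
  have hb : 0 < b := lt_of_le_of_lt ha hab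
  induction j with
  | zero =>
    ext z
    simp only [Gam, Finset.mem_range, Set.mem_iUnion]
    constructor
    · rintro ⟨i, hi, hz⟩
      interval_cases i
      exact ⟨hz.2, Or.inr hz.1⟩
    · rintro ⟨hv, hx⟩
      refine ⟨0, by omega, ?_⟩
      rcases hx with hx | hx
      · exfalso
        simp only [Set.mem_Ioc] at hx
        norm_num at hx
        linarith [hx.1, hx.2]
      · exact ⟨hx, hv⟩
  | succ n ih =>
    rw [gam_succ, ih]
    ext z
    simp only [Set.mem_union, Set.mem_setOf_eq, Omi]
    constructor
    · rintro (⟨hv, hx⟩ | ⟨hv, h1, h2⟩)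
      · refine ⟨hv, ?_⟩
        rcases hx with hx | hx
        · left
          obtain ⟨hx1, hx2⟩ := hx
          have hvpos : 0 < z.2 := lt_of_le_of_lt ha (hV hv).1
          have hinv : 0 < z.2 * b⁻¹ := by positivity
          refine Set.mem_Ioc.mpr ⟨?_, hx2⟩
          push_cast
          nlinarith [hinv]
        · right; exact hx
      · refine ⟨hv, Or.inl ⟨by push_cast; exact h1, ?_⟩⟩
        have hvpos : 0 < z.2 := lt_of_le_of_lt ha (hV hv).1
        have : (0:ℝ) ≤ (n:ℝ) * z.2 * b⁻¹ := by positivity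
        linarith
    · rintro ⟨hv, hx | hx⟩
      · rcases le_or_gt z.1 (-((n:ℝ) * z.2 * b⁻¹)) with h | h
        · right
          exact ⟨hv, by push_cast at hx ⊢; exact hx.1, h⟩
        · left
          exact ⟨hv, Or.inl ⟨h, hx.2⟩⟩
      · left; exact ⟨hv, Or.inr hx⟩

set_option maxHeartbeats 1000000 in
theorem stmt2
    (a b p q : ℝ) (ha : 0 ≤ a) (hab : a < b)
    (hp : 0 ≤ p) (hq : 0 ≤ q) (hpq : 0 < p + q)
    (V : Set ℝ) (hV : V ⊆ Set.Ioo a b) (hVm : MeasurableSet V)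
    (ν : Measure ℝ) [SigmaFinite ν]
    (k : ℝ → ℝ → ℝ) (hkm : Measurable (Function.uncurry k))
    (hknn : ∀ w v : ℝ, 0 ≤ k w v)
    (hk1 : ∀ w ∈ V, ∫ v in V, k w v ∂ν = 1)
    (f ftil : ℝ × ℝ → ℝ)
    (hf : IntegrableOn f ((Set.Ioo (0 : ℝ) 1) ×ˢ V) ((volume : Measure ℝ).prod ν))
    (hext : IsBoundaryExtension b p q k ν V f ftil)
    (j : ℕ) :
    ∫ z in Gam b V j, |ftil z| ∂((volume : Measure ℝ).prod ν)
      ≤ (∑ i ∈ Finset.range (j + 1), (p + q) ^ i) *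
        ∫ z in (Set.Ioo (0 : ℝ) 1) ×ˢ V, |f z| ∂((volume : Measure ℝ).prod ν) := by
  obtain ⟨hftm, hfti, hfeq, hbd⟩ := hext
  have hb : (0:ℝ) < b := lt_of_le_of_lt ha hab
  set μ := (volume : Measure ℝ).prod ν with hmudef
  set F : ℝ × ℝ → ℝ≥0∞ := fun z => (‖ftil z‖₊ : ℝ≥0∞) with hFdef
  have hFm : Measurable F := hftm.enorm
  set L : ℝ≥0∞ := ∫⁻ z in (Set.Ioo (0:ℝ) 1) ×ˢ V, (‖f z‖₊ : ℝ≥0∞) ∂μ with hLdef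
  set M : ℕ → ℝ≥0∞ := fun i => ∫⁻ z in Omi b V i, F z ∂μ with hMdef
  set T : ℕ → ℝ≥0∞ := fun jj => ∫⁻ z in Gam b V jj, F z ∂μ with hTdef
  set A : ℕ → ℝ → ℝ≥0∞ := fun n w =>
    ∫⁻ y in Set.Ioc (1 - ((n:ℝ)+1) * w * b⁻¹) (1 - (n:ℝ) * w * b⁻¹), F (y, w) ∂volume
    with hAdef
  have homi0 : Omi b V 0 = (Set.Ioo (0:ℝ) 1) ×ˢ V := rfl
  -- M 0 = L
  have hM0 : M 0 = L := by
    have hsub : (Set.Ioo (0:ℝ) 1) ×ˢ V ⊆ (Set.Iio (1:ℝ)) ×ˢ V :=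
      Set.prod_mono_left (Set.Ioo_subset_Iio_self)
    have h1 := ae_restrict_of_ae_restrict_of_subset hsub hfeq
    have h2 : ∀ᵐ z ∂(μ.restrict ((Set.Ioo (0:ℝ) 1) ×ˢ V)), z ∈ (Set.Ioo (0:ℝ) 1) ×ˢ V :=
      ae_restrict_mem (measurableSet_Ioo.prod hVm)
    simp only [hMdef, hLdef, homi0]
    apply lintegral_congr_ae
    filter_upwards [h1, h2] with z hz1 hz2
    simp only [hFdef]
    rw [hz1 hz2.1.1]
  -- T decomposition
  have hTsum : ∀ jj : ℕ, T jj = ∑ i ∈ Finset.range (jj+1), M i := by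
    intro jj
    refine lintegral_biUnion_finset ?_ (fun i _ => omi_meas hVm i) _
    intro i _ i' _ hne
    rcases hne.lt_or_gt with h | h
    · exact omi_disj ha hab hV h
    · exact (omi_disj ha hab hV h).symm
  -- measurability of A n
  have hAm : ∀ n : ℕ, Measurable (A n) := by
    intro n
    have hset : MeasurableSet {q : ℝ × ℝ |
        1 - ((n:ℝ)+1) * q.1 * b⁻¹ < q.2 ∧ q.2 ≤ 1 - (n:ℝ) * q.1 * b⁻¹} := by
      have hm1 : Measurable fun q : ℝ × ℝ => 1 - ((n:ℝ)+1) * q.1 * b⁻¹ := by fun_prop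
      have hm2 : Measurable fun q : ℝ × ℝ => 1 - (n:ℝ) * q.1 * b⁻¹ := by fun_prop
      exact (measurableSet_lt hm1 measurable_snd).inter (measurableSet_le measurable_snd hm2)
    have hfun : Measurable fun q : ℝ × ℝ => F (q.2, q.1) :=
      hFm.comp (measurable_snd.prodMk measurable_fst)
    have heq : A n = fun w => ∫⁻ y,
        ({q : ℝ × ℝ | 1 - ((n:ℝ)+1) * q.1 * b⁻¹ < q.2 ∧ q.2 ≤ 1 - (n:ℝ) * q.1 * b⁻¹}.indicator
          (fun q => F (q.2, q.1))) (w, y) ∂volume := by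
      funext w
      simp only [hAdef]
      rw [← lintegral_indicator measurableSet_Ioc _]
      congr 1
    rw [heq]
    exact Measurable.lintegral_prod_right' (hfun.indicator hset)
  -- adjacency of the A-intervals
  have hAadd : ∀ w : ℝ, 0 < w → w < b → ∀ m : ℕ,
      ∑ n ∈ Finset.range m, A n w
        = ∫⁻ y in Set.Ioc (1 - (m:ℝ) * w * b⁻¹) 1, F (y, w) ∂volume := by
    intro w hw hwb m
    induction m with
    | zero => simp
    | succ m ih =>
      rw [Finset.sum_range_succ, ih]
      simp only [hAdef]
      have h1 : (1:ℝ) - (m:ℝ) * w * b⁻¹ ≤ 1 := by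
        have : (0:ℝ) ≤ (m:ℝ) * w * b⁻¹ := by positivity
        linarith
      have h2 : (1:ℝ) - ((m:ℝ)+1) * w * b⁻¹ ≤ 1 - (m:ℝ) * w * b⁻¹ := by
        have : (0:ℝ) ≤ w * b⁻¹ := by positivity
        nlinarith
      rw [add_comm, ← lintegral_union measurableSet_Ioc (Set.Ioc_disjoint_Ioc_of_le le_rfl),
        Set.Ioc_union_Ioc_eq_Ioc h2 h1]
      push_cast
      ring_nf
  -- the A-sum is dominated by T
  have hAsumT : ∀ jj : ℕ,
      ∫⁻ w in V, (∑ n ∈ Finset.range (jj+1), A n w) ∂ν ≤ T jj := by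
    intro jj
    have hsec : T jj = ∫⁻ v in V,
        ∫⁻ x in Set.Ioc (-((jj:ℝ) * v * b⁻¹)) 0 ∪ Set.Ioo 0 1, F (x, v) ∂volume ∂ν := by
      simp only [hTdef]
      rw [hmudef, lint_section ν F hFm (gam_meas hVm jj), ← lintegral_indicator hVm]
      congr 1
      funext v
      by_cases hv : v ∈ V
      · rw [Set.indicator_of_mem hv]
        have hxeq : {x : ℝ | (x, v) ∈ Gam b V jj}
            = Set.Ioc (-((jj:ℝ) * v * b⁻¹)) 0 ∪ Set.Ioo 0 1 := by
          rw [gam_eq ha hab hV jj]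
          ext x
          simp [hv]
        rw [hxeq]
      · rw [Set.indicator_of_notMem hv]
        have : {x | (x, v) ∈ Gam b V jj} = ∅ := by
          rw [gam_eq ha hab hV jj]; ext x; simp [hv]
        rw [this]
        simp
    rw [hsec]
    refine lintegral_mono_ae ?_
    filter_upwards [ae_restrict_mem hVm] with w hw
    have hwpos : 0 < w := lt_of_le_of_lt ha (hV hw).1
    have hwb : w < b := (hV hw).2
    rw [hAadd w hwpos hwb (jj+1)]
    have hIoo : ((volume : Measure ℝ)).restrict
        (Set.Ioc (1 - ((jj:ℕ)+1:ℝ) * w * b⁻¹) 1)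
        = ((volume : Measure ℝ)).restrict (Set.Ioo (1 - ((jj:ℕ)+1:ℝ) * w * b⁻¹) 1) :=
      (Measure.restrict_congr_set Ioo_ae_eq_Ioc).symm
    push_cast
    rw [hIoo]
    refine lintegral_mono_set ?_
    intro y hy
    obtain ⟨hy1, hy2⟩ := hy
    rcases le_or_gt y 0 with h0 | h0
    · left
      refine ⟨?_, h0⟩
      have hwb1 : w * b⁻¹ < 1 := by
        rw [← div_eq_mul_inv]
        exact (div_lt_one hb).2 hwb
      nlinarith
    · right
      exact ⟨h0, hy2⟩
  -- the key estimate
  have hMle : ∀ n : ℕ, M (n+1) ≤ ENNReal.ofReal (p+q) * ∫⁻ w in V, A n w ∂ν := by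
    intro n
    have hOm : MeasurableSet (Omi b V (n+1)) := omi_meas hVm (n+1)
    have hOsub : Omi b V (n+1) ⊆ (Set.Iio (1:ℝ)) ×ˢ V := by
      rintro z ⟨hv, h1, h2⟩
      have hvpos : 0 < z.2 := lt_of_le_of_lt ha (hV hv).1
      have h3 : (0:ℝ) ≤ (n:ℝ) * z.2 * b⁻¹ := by positivity
      exact ⟨by simp only [Set.mem_Iio]; linarith, hv⟩
    -- the two components of the ell-integral
    set P : ℝ × ℝ → ℝ≥0∞ := fun z => ∫⁻ w in V,
        ENNReal.ofReal (p * w * z.2⁻¹ * k w z.2) *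
          (‖ftil (1 + z.1 * w * z.2⁻¹, w)‖₊ : ℝ≥0∞) ∂ν with hPdef
    set Q : ℝ × ℝ → ℝ≥0∞ := fun z =>
        ENNReal.ofReal q * (‖ftil (1 + z.1 * z.2 * z.2⁻¹, z.2)‖₊ : ℝ≥0∞) with hQdef
    -- a.e. pointwise bound
    have hae : ∀ᵐ z ∂(μ.restrict (Omi b V (n+1))), F z ≤ P z + Q z := by
      have h1 := ae_restrict_of_ae_restrict_of_subset hOsub hbd
      have h2 : ∀ᵐ z ∂(μ.restrict (Omi b V (n+1))), z ∈ Omi b V (n+1) :=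
        ae_restrict_mem hOm
      filter_upwards [h1, h2] with z hz1 hz2
      have hvpos : 0 < z.2 := lt_of_le_of_lt ha (hV hz2.1).1
      have hzle : z.1 ≤ 0 := by
        have h3 : (0:ℝ) ≤ (n:ℝ) * z.2 * b⁻¹ := by positivity
        have h4 := hz2.2.2
        linarith
      obtain ⟨hint, heq⟩ := hz1 hzle
      have hg : Measurable fun w => (‖ftil (1 + z.1 * w * z.2⁻¹, w)‖₊ : ℝ≥0∞) := by
        refine Measurable.coe_nnreal_ennreal (Measurable.nnnorm ?_)
        exact hftm.comp ((measurable_const.add ((measurable_id.const_mul z.1).mul_const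
          z.2⁻¹)).prodMk measurable_id)
      have hd : Measurable fun w => ENNReal.ofReal (p * w * z.2⁻¹ * k w z.2) := by
        apply Measurable.ennreal_ofReal
        exact ((measurable_id.const_mul p).mul_const z.2⁻¹).mul
          (hkm.comp (measurable_id.prodMk measurable_const))
      have hdec : (∫⁻ w, (‖ftil (1 + z.1 * w * z.2⁻¹, w)‖₊ : ℝ≥0∞) ∂(ell p q k ν V z.2))
          = P z + Q z := by
        simp only [hPdef, hQdef]
        unfold ell
        rw [lintegral_add_measure, lintegral_withDensity_eq_lintegral_mul _ hd hg,
          lintegral_smul_measure, lintegral_dirac' _ hg]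
        rfl
      rw [← hdec]
      simp only [hFdef]
      rw [heq]
      calc (‖∫ w, ftil (1 + z.1 * w * z.2⁻¹, w) ∂(ell p q k ν V z.2)‖₊ : ℝ≥0∞)
          = ENNReal.ofReal ‖∫ w, ftil (1 + z.1 * w * z.2⁻¹, w) ∂(ell p q k ν V z.2)‖ :=
            (ofReal_norm _).symm
        _ ≤ ENNReal.ofReal (∫ w, ‖ftil (1 + z.1 * w * z.2⁻¹, w)‖ ∂(ell p q k ν V z.2)) :=
            ENNReal.ofReal_le_ofReal (norm_integral_le_integral_norm _)
        _ = ∫⁻ w, (‖ftil (1 + z.1 * w * z.2⁻¹, w)‖₊ : ℝ≥0∞) ∂(ell p q k ν V z.2) :=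
            ofReal_integral_norm_eq_lintegral_enorm hint
    -- measurability of P and Q
    have hQm : Measurable Q := by
      apply Measurable.const_mul
      refine Measurable.coe_nnreal_ennreal (Measurable.nnnorm ?_)
      apply hftm.comp
      apply Measurable.prodMk
      · exact measurable_const.add ((measurable_fst.mul measurable_snd).mul
          measurable_snd.inv)
      · exact measurable_snd
    have hPinner : Measurable (fun y : (ℝ × ℝ) × ℝ =>
        ENNReal.ofReal (p * y.2 * y.1.2⁻¹ * k y.2 y.1.2) *
          (‖ftil (1 + y.1.1 * y.2 * y.1.2⁻¹, y.2)‖₊ : ℝ≥0∞)) := by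
      apply Measurable.fun_mul
      · apply Measurable.ennreal_ofReal
        apply Measurable.fun_mul
        · exact (measurable_snd.const_mul p).mul (measurable_fst.snd.inv)
        · exact hkm.comp (measurable_snd.prodMk measurable_fst.snd)
      · refine Measurable.coe_nnreal_ennreal (Measurable.nnnorm ?_)
        apply hftm.comp
        apply Measurable.prodMk
        · exact measurable_const.add ((measurable_fst.fst.mul measurable_snd).mul
            measurable_fst.snd.inv)
        · exact measurable_snd
    have hPm : Measurable P := by
      have heq2 : P = fun z => ∫⁻ w,
          ({y : (ℝ × ℝ) × ℝ | y.2 ∈ V}.indicator (fun y =>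
            ENNReal.ofReal (p * y.2 * y.1.2⁻¹ * k y.2 y.1.2) *
              (‖ftil (1 + y.1.1 * y.2 * y.1.2⁻¹, y.2)‖₊ : ℝ≥0∞))) (z, w) ∂ν := by
        funext z
        simp only [hPdef]
        rw [← lintegral_indicator hVm _]
        congr 1
      rw [heq2]
      exact Measurable.lintegral_prod_right'
        (hPinner.indicator (hVm.preimage measurable_snd))
    -- main chain
    have step1 : M (n+1) ≤ ∫⁻ z in Omi b V (n+1), (P z + Q z) ∂μ := by
      simp only [hMdef]
      exact lintegral_mono_ae hae
    have step2 : ∫⁻ z in Omi b V (n+1), (P z + Q z) ∂μ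
        = ∫⁻ z in Omi b V (n+1), P z ∂μ + ∫⁻ z in Omi b V (n+1), Q z ∂μ :=
      lintegral_add_left hPm _
    -- sections of Omi (n+1)
    have hsecOmi : ∀ v : ℝ, v ∈ V → {x : ℝ | (x, v) ∈ Omi b V (n+1)}
        = Set.Ioc (-(((n:ℝ)+1) * v * b⁻¹)) (-((n:ℝ) * v * b⁻¹)) := by
      intro v hv
      ext x
      simp [Omi, hv]
    have hsecOmi' : ∀ v : ℝ, v ∉ V → {x : ℝ | (x, v) ∈ Omi b V (n+1)} = ∅ := by
      intro v hv
      ext x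
      simp [Omi, hv]
    -- Q part
    have hQpart : ∫⁻ z in Omi b V (n+1), Q z ∂μ
        ≤ ENNReal.ofReal q * ∫⁻ w in V, A n w ∂ν := by
      rw [hmudef, lint_section ν Q hQm hOm]
      have hcong : ∀ v : ℝ,
          (∫⁻ x in {x : ℝ | (x, v) ∈ Omi b V (n+1)}, Q (x, v) ∂volume)
          = V.indicator (fun v => ENNReal.ofReal q * A n v) v := by
        intro v
        by_cases hv : v ∈ V
        · rw [Set.indicator_of_mem hv]
          have hvpos : 0 < v := lt_of_le_of_lt ha (hV hv).1
          rw [hsecOmi v hv]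
          have hQeq : ∀ x : ℝ, Q (x, v) = ENNReal.ofReal q * (fun y => F (y, v)) (1 * x + 1) := by
            intro x
            simp only [hQdef, hFdef]
            congr 2
            rw [mul_assoc, mul_inv_cancel₀ hvpos.ne', mul_one, one_mul, add_comm]
          simp_rw [hQeq]
          rw [lintegral_const_mul' _ _ ENNReal.ofReal_ne_top]
          congr 1
          have := lint_affine (fun y => F (y, v))
            (hFm.comp (measurable_id.prodMk measurable_const)) one_pos 1
            (measurableSet_Ioc : MeasurableSet (Set.Ioc (-(((n:ℝ)+1) * v * b⁻¹)) (-((n:ℝ) * v * b⁻¹))))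
            (measurableSet_Ioc : MeasurableSet (Set.Ioc (1 - ((n:ℝ)+1) * v * b⁻¹) (1 - (n:ℝ) * v * b⁻¹)))
            (by
              intro x
              simp only [Set.mem_Ioc, one_mul]
              constructor
              · rintro ⟨h1', h2'⟩; constructor <;> linarith
              · rintro ⟨h1', h2'⟩; constructor <;> linarith)
          rw [this, inv_one, ENNReal.ofReal_one, one_mul]
        · rw [Set.indicator_of_notMem hv, hsecOmi' v hv]
          simp
      rw [lintegral_congr hcong, lintegral_indicator hVm,
        lintegral_const_mul' _ _ ENNReal.ofReal_ne_top]
    -- P part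
    have hPpart : ∫⁻ z in Omi b V (n+1), P z ∂μ
        ≤ ENNReal.ofReal p * ∫⁻ w in V, A n w ∂ν := by
      rw [hmudef, lint_section ν P hPm hOm]
      have hcong : ∀ v : ℝ, (∫⁻ x in {x : ℝ | (x, v) ∈ Omi b V (n+1)}, P (x, v) ∂volume)
          = V.indicator (fun v => ∫⁻ w in V, ENNReal.ofReal (p * k w v) * A n w ∂ν) v := by
        intro v
        by_cases hv : v ∈ V
        · rw [Set.indicator_of_mem hv, hsecOmi v hv]
          have hvpos : 0 < v := lt_of_le_of_lt ha (hV hv).1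
          have hmc : Measurable fun xw : ℝ × ℝ =>
              ENNReal.ofReal (p * xw.2 * v⁻¹ * k xw.2 v) *
                (‖ftil (1 + xw.1 * xw.2 * v⁻¹, xw.2)‖₊ : ℝ≥0∞) := by
            apply Measurable.fun_mul
            · exact (((measurable_snd.const_mul p).mul_const v⁻¹).mul
                (hkm.comp (measurable_snd.prodMk measurable_const))).ennreal_ofReal
            · exact (hftm.comp ((measurable_const.add
                ((measurable_fst.mul measurable_snd).mul_const v⁻¹)).prodMk
                measurable_snd)).nnnorm.coe_nnreal_ennreal
          have hswap : (∫⁻ x in Set.Ioc (-(((n:ℝ)+1) * v * b⁻¹)) (-((n:ℝ) * v * b⁻¹)),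
                P (x, v) ∂volume)
              = ∫⁻ w in V, ∫⁻ x in Set.Ioc (-(((n:ℝ)+1) * v * b⁻¹)) (-((n:ℝ) * v * b⁻¹)),
                  ENNReal.ofReal (p * w * v⁻¹ * k w v) *
                    (‖ftil (1 + x * w * v⁻¹, w)‖₊ : ℝ≥0∞) ∂volume ∂ν := by
            simp only [hPdef]
            exact lintegral_lintegral_swap hmc.aemeasurable
          rw [hswap]
          refine setLIntegral_congr_fun hVm ?_
          intro w hw
          have hwpos : 0 < w := lt_of_le_of_lt ha (hV hw).1
          have hc : (0:ℝ) < w * v⁻¹ := by positivity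
          have harg : ∀ x : ℝ, ENNReal.ofReal (p * w * v⁻¹ * k w v) *
              (‖ftil (1 + x * w * v⁻¹, w)‖₊ : ℝ≥0∞)
              = ENNReal.ofReal (p * w * v⁻¹ * k w v) *
                (fun y => F (y, w)) (w * v⁻¹ * x + 1) := by
            intro x
            simp only [hFdef]
            congr 3
            ring
          simp_rw [harg]
          rw [lintegral_const_mul' _ _ ENNReal.ofReal_ne_top]
          have hkey1 : w * v⁻¹ * (-(((n:ℝ)+1) * v * b⁻¹)) + 1 = 1 - ((n:ℝ)+1) * w * b⁻¹ := by
            field_simp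
            ring
          have hkey2 : w * v⁻¹ * (-((n:ℝ) * v * b⁻¹)) + 1 = 1 - (n:ℝ) * w * b⁻¹ := by
            field_simp
            ring
          have hiff : ∀ x : ℝ, x ∈ Set.Ioc (-(((n:ℝ)+1) * v * b⁻¹)) (-((n:ℝ) * v * b⁻¹))
              ↔ w * v⁻¹ * x + 1 ∈ Set.Ioc (1 - ((n:ℝ)+1) * w * b⁻¹) (1 - (n:ℝ) * w * b⁻¹) := by
            intro x
            rw [← hkey1, ← hkey2]
            simp only [Set.mem_Ioc]
            constructor
            · rintro ⟨h1', h2'⟩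
              exact ⟨by nlinarith [mul_lt_mul_of_pos_left h1' hc],
                by nlinarith [mul_le_mul_of_nonneg_left h2' hc.le]⟩
            · rintro ⟨h1', h2'⟩
              constructor
              · exact lt_of_mul_lt_mul_left (by linarith) hc.le
              · exact le_of_mul_le_mul_left (by linarith) hc
          rw [lint_affine (fun y => F (y, w))
            (hFm.comp (measurable_id.prodMk measurable_const)) hc 1
            measurableSet_Ioc measurableSet_Ioc hiff]
          rw [← mul_assoc, ← ENNReal.ofReal_mul (mul_nonneg (by positivity) (hknn w v))]
          have hco : p * w * v⁻¹ * k w v * (w * v⁻¹)⁻¹ = p * k w v := by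
            field_simp
          rw [hco]
        · rw [Set.indicator_of_notMem hv, hsecOmi' v hv]
          simp
      rw [lintegral_congr hcong, lintegral_indicator hVm]
      have hout : Measurable fun vw : ℝ × ℝ =>
          ENNReal.ofReal (p * k vw.2 vw.1) * A n vw.2 :=
        ((hkm.comp (measurable_snd.prodMk measurable_fst)).const_mul p).ennreal_ofReal.mul
          ((hAm n).comp measurable_snd)
      rw [lintegral_lintegral_swap hout.aemeasurable]
      have hinner : ∀ w : ℝ, w ∈ V →
          (∫⁻ v in V, ENNReal.ofReal (p * k w v) * A n w ∂ν)
            = ENNReal.ofReal p * A n w := by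
        intro w hw
        have hmkw : Measurable fun v => ENNReal.ofReal (p * k w v) :=
          ((hkm.comp (measurable_const.prodMk measurable_id)).const_mul p).ennreal_ofReal
        rw [lintegral_mul_const _ hmkw]
        have : ∀ v : ℝ, ENNReal.ofReal (p * k w v)
            = ENNReal.ofReal p * ENNReal.ofReal (k w v) := by
          intro v
          rw [← ENNReal.ofReal_mul hp]
        simp_rw [this]
        rw [lintegral_const_mul' _ _ ENNReal.ofReal_ne_top,
          kone hkm hknn (hk1 w hw), mul_one]
      rw [setLIntegral_congr_fun hVm hinner]
      rw [lintegral_const_mul' _ _ ENNReal.ofReal_ne_top]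
    calc M (n+1) ≤ ∫⁻ z in Omi b V (n+1), P z ∂μ + ∫⁻ z in Omi b V (n+1), Q z ∂μ := by
          rw [← step2]; exact step1
      _ ≤ ENNReal.ofReal p * ∫⁻ w in V, A n w ∂ν
          + ENNReal.ofReal q * ∫⁻ w in V, A n w ∂ν := add_le_add hPpart hQpart
      _ = ENNReal.ofReal (p+q) * ∫⁻ w in V, A n w ∂ν := by
          rw [ENNReal.ofReal_add hp hq, add_mul]
  -- induction
  set c : ℝ≥0∞ := ENNReal.ofReal (p+q) with hcdef
  have claim : ∀ jj : ℕ, T jj ≤ (∑ i ∈ Finset.range (jj+1), c ^ i) * L := by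
    intro jj
    induction jj with
    | zero =>
      rw [hTsum 0]
      simp [hM0]
    | succ n ih =>
      rw [hTsum (n+1), Finset.sum_range_succ']
      have h2 : ∑ i ∈ Finset.range (n+1), M (i+1) ≤ c * T n := by
        calc ∑ i ∈ Finset.range (n+1), M (i+1)
            ≤ ∑ i ∈ Finset.range (n+1), c * ∫⁻ w in V, A i w ∂ν :=
              Finset.sum_le_sum (fun i _ => hMle i)
          _ = c * ∑ i ∈ Finset.range (n+1), ∫⁻ w in V, A i w ∂ν := by
              rw [Finset.mul_sum]
          _ = c * ∫⁻ w in V, (∑ i ∈ Finset.range (n+1), A i w) ∂ν := by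
              rw [lintegral_finset_sum' _ (fun i _ => (hAm i).aemeasurable)]
          _ ≤ c * T n := mul_le_mul_right (hAsumT n) _
      have hgeom : (∑ i ∈ Finset.range (n+2), c ^ i)
          = c * ∑ i ∈ Finset.range (n+1), c ^ i + 1 := by
        rw [Finset.sum_range_succ', Finset.mul_sum]
        simp [pow_succ, mul_comm]
      calc ∑ i ∈ Finset.range (n+1), M (i+1) + M 0
          ≤ c * T n + L := add_le_add h2 (le_of_eq hM0)
        _ ≤ c * ((∑ i ∈ Finset.range (n+1), c ^ i) * L) + L :=
            add_le_add_left (mul_le_mul_right ih _) _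
        _ = (∑ i ∈ Finset.range (n+2), c ^ i) * L := by
            rw [hgeom, add_mul, one_mul, mul_assoc]
  -- convert to real integrals
  have hTfin : T j ≠ ⊤ := by
    have := (hfti j).2
    rw [HasFiniteIntegral] at this
    exact this.ne
  have hLfin : L ≠ ⊤ := by
    have := hf.2
    rw [HasFiniteIntegral] at this
    exact this.ne
  have hcfin : (∑ i ∈ Finset.range (j+1), c ^ i) ≠ ⊤ := by
    refine (ENNReal.sum_lt_top.mpr ?_).ne
    intro i _
    exact (ENNReal.pow_lt_top ENNReal.ofReal_lt_top)
  have hLHS : ∫ z in Gam b V j, |ftil z| ∂μ = (T j).toReal := by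
    have h1 : ∀ z : ℝ × ℝ, |ftil z| = ‖ftil z‖ := fun z => (Real.norm_eq_abs _).symm
    simp_rw [h1]
    rw [integral_norm_eq_lintegral_enorm (hftm.aestronglyMeasurable.restrict)]
    rfl
  have hRHS : ∫ z in (Set.Ioo (0:ℝ) 1) ×ˢ V, |f z| ∂μ = L.toReal := by
    have h1 : ∀ z : ℝ × ℝ, |f z| = ‖f z‖ := fun z => (Real.norm_eq_abs _).symm
    simp_rw [h1]
    rw [integral_norm_eq_lintegral_enorm hf.1]
    rfl
  rw [hLHS, hRHS]
  have hmono := ENNReal.toReal_mono (ENNReal.mul_ne_top hcfin hLfin) (claim j)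
  refine le_trans hmono (le_of_eq ?_)
  rw [ENNReal.toReal_mul]
  congr 1
  have hsum : (∑ i ∈ Finset.range (j+1), c ^ i)
      = ENNReal.ofReal (∑ i ∈ Finset.range (j+1), (p+q) ^ i) := by
    rw [ENNReal.ofReal_sum_of_nonneg (fun i _ => pow_nonneg (by linarith) i)]
    congr 1
    funext i
    rw [hcdef, ← ENNReal.ofReal_pow (by linarith)]
  rw [hsum, ENNReal.toReal_ofReal (Finset.sum_nonneg (fun i _ => pow_nonneg (by linarith) i))]
end

section
/- Let f ∈ L¹(Ω,μ) satisfy f ≥ 0 μ-almost everywhere on Ω, and let f̃ be a boundary extension of f. Then f̃ ≥ 0 μ-almost everywhere on Ω̃. -/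
open MeasureTheory Set Filter Topology

lemma measurableSet_Omi {V : Set ℝ} (hVm : MeasurableSet V) (b : ℝ) (i : ℕ) :
    MeasurableSet (Omi b V i) := by
  cases i with
  | zero => exact measurableSet_Ioo.prod hVm
  | succ i =>
      apply MeasurableSet.inter (measurable_snd hVm)
      refine MeasurableSet.inter ?_ ?_
      · exact measurableSet_lt (by fun_prop) measurable_fst
      · exact measurableSet_le measurable_fst (by fun_prop)

lemma measurableSet_Gam {V : Set ℝ} (hVm : MeasurableSet V) (b : ℝ) (j : ℕ) :
    MeasurableSet (Gam b V j) :=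
  MeasurableSet.biUnion (Finset.range (j+1)).countable_toSet
    (fun i _ => measurableSet_Omi hVm b i)

lemma Omi_subset_Gam (b : ℝ) (V : Set ℝ) {i j : ℕ} (h : i ≤ j) :
    Omi b V i ⊆ Gam b V j := fun z hz => by
  simp only [Gam, Set.mem_iUnion, Finset.mem_coe, Finset.mem_range]
  exact ⟨i, by omega, hz⟩

lemma mem_Omi_floor {b : ℝ} (hb : 0 < b) {V : Set ℝ} {y w : ℝ} (hw : w ∈ V)
    (h0w : 0 < w) (hy : y ≤ 0) : (y, w) ∈ Omi b V (⌊-y * b / w⌋₊ + 1) := by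
  set t := -y * b / w with ht
  have ht0 : 0 ≤ t := div_nonneg (mul_nonneg (by linarith) hb.le) h0w.le
  have hjt : (⌊t⌋₊ : ℝ) ≤ t := Nat.floor_le ht0
  have htj : t < ⌊t⌋₊ + 1 := Nat.lt_floor_add_one t
  refine ⟨hw, ?_, ?_⟩
  · -- -((⌊t⌋+1) * w * b⁻¹) < y
    have h1 : -y * b < ((⌊t⌋₊ : ℝ) + 1) * w := by
      have := (div_lt_iff₀ h0w).mp htj
      linarith
    have h2 : -y < ((⌊t⌋₊ : ℝ) + 1) * w / b := (lt_div_iff₀ hb).mpr (by linarith)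
    have h3 : ((⌊t⌋₊ : ℝ) + 1) * w / b = ((⌊t⌋₊ : ℝ) + 1) * w * b⁻¹ := div_eq_mul_inv _ _
    linarith
  · have h1 : (⌊t⌋₊ : ℝ) * w ≤ -y * b := by
      have := (le_div_iff₀ h0w).mp hjt
      linarith
    have h2 : (⌊t⌋₊ : ℝ) * w / b ≤ -y := (div_le_iff₀ hb).mpr (by linarith)
    have h3 : (⌊t⌋₊ : ℝ) * w / b = (⌊t⌋₊ : ℝ) * w * b⁻¹ := div_eq_mul_inv _ _
    linarith

lemma mem_Gam_of {b : ℝ} (hb : 0 < b) {V : Set ℝ} {i : ℕ} {y w : ℝ} (hw : w ∈ V)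
    (h0w : 0 < w) (h1 : -((i : ℝ) * w * b⁻¹) < y) (h2 : y < 1) :
    (y, w) ∈ Gam b V i := by
  rcases lt_or_ge 0 y with hy | hy
  · exact Omi_subset_Gam b V (Nat.zero_le i) ⟨⟨hy, h2⟩, hw⟩
  · have hmem := mem_Omi_floor hb hw h0w hy
    refine Omi_subset_Gam b V ?_ hmem
    have ht0 : 0 ≤ -y * b / w := div_nonneg (mul_nonneg (by linarith) hb.le) h0w.le
    have hti : -y * b / w < (i : ℝ) := by
      rw [div_lt_iff₀ h0w]
      have h1' : -y < (i : ℝ) * w * b⁻¹ := by linarith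
      have h3 : (i : ℝ) * w * b⁻¹ = (i : ℝ) * w / b := (div_eq_mul_inv _ _).symm
      rw [h3] at h1'
      have := (lt_div_iff₀ hb).mp h1'
      linarith
    have := (Nat.floor_lt ht0).mpr hti
    omega

lemma map_mem_Gam {a b : ℝ} (ha : 0 ≤ a) (hb : 0 < b) {V : Set ℝ} (hV : V ⊆ Set.Ioo a b)
    {i : ℕ} {x v w : ℝ} (hv : v ∈ V) (hw : w ∈ V)
    (hx1 : -(((i : ℝ) + 1) * v * b⁻¹) < x) (hx0 : x < 0) :
    (1 + x * w * v⁻¹, w) ∈ Gam b V i := by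
  obtain ⟨hav, hvb⟩ := hV hv
  obtain ⟨haw, hwb⟩ := hV hw
  have h0v : 0 < v := lt_of_le_of_lt ha hav
  have h0w : 0 < w := lt_of_le_of_lt ha haw
  have hwv : 0 < w * v⁻¹ := mul_pos h0w (inv_pos.mpr h0v)
  apply mem_Gam_of hb hw h0w
  · have key : (-(((i : ℝ) + 1) * v * b⁻¹)) * (w * v⁻¹) = -(((i : ℝ) + 1) * w * b⁻¹) := by
      field_simp
    have h2 : -(((i : ℝ) + 1) * w * b⁻¹) < x * w * v⁻¹ := by
      have := mul_lt_mul_of_pos_right hx1 hwv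
      rw [key] at this
      linarith [mul_assoc x w v⁻¹]
    have hwb1 : w * b⁻¹ < 1 := by
      rw [← div_eq_mul_inv]
      exact (div_lt_one hb).mpr hwb
    have expand : ((i : ℝ) + 1) * w * b⁻¹ = (i : ℝ) * w * b⁻¹ + w * b⁻¹ := by ring
    linarith
  · have : x * (w * v⁻¹) < 0 := mul_neg_of_neg_of_pos hx0 hwv
    have h4 : x * w * v⁻¹ = x * (w * v⁻¹) := mul_assoc _ _ _
    linarith

lemma affine_null {c : ℝ} (hc : c ≠ 0) {s : Set ℝ} (hs : volume s = 0) :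
    volume {x : ℝ | 1 + x * c ∈ s} = 0 := by
  have h1 : {x : ℝ | 1 + x * c ∈ s} = (· * c) ⁻¹' ((1 + ·) ⁻¹' s) := rfl
  rw [h1, Real.volume_preimage_mul_right hc, measure_preimage_add, hs, mul_zero]

theorem stmt5
    (a b p q : ℝ) (ha : 0 ≤ a) (hab : a < b)
    (hp : 0 ≤ p) (hq : 0 ≤ q) (hpq : 0 < p + q)
    (V : Set ℝ) (hV : V ⊆ Set.Ioo a b) (hVm : MeasurableSet V)
    (ν : Measure ℝ) [SigmaFinite ν]
    (k : ℝ → ℝ → ℝ) (hkm : Measurable (Function.uncurry k))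
    (hknn : ∀ w v : ℝ, 0 ≤ k w v)
    (hk1 : ∀ w ∈ V, ∫ v in V, k w v ∂ν = 1)
    (f ftil : ℝ × ℝ → ℝ)
    (hf : IntegrableOn f ((Set.Ioo (0 : ℝ) 1) ×ˢ V) ((volume : Measure ℝ).prod ν))
    (hfnn : ∀ᵐ z ∂(((volume : Measure ℝ).prod ν).restrict ((Set.Ioo (0 : ℝ) 1) ×ˢ V)),
      0 ≤ f z)
    (hext : IsBoundaryExtension b p q k ν V f ftil) :
    ∀ᵐ z ∂(((volume : Measure ℝ).prod ν).restrict ((Set.Iio (1 : ℝ)) ×ˢ V)),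
      0 ≤ ftil z := by
  obtain ⟨hmeas, hGint, heqf, hrec⟩ := hext
  set μ : Measure (ℝ × ℝ) := (volume : Measure ℝ).prod ν with hμdef
  have hb : 0 < b := lt_of_le_of_lt ha hab
  set N : Set (ℝ × ℝ) := {z : ℝ × ℝ | ftil z < 0} with hNdef
  have hNm : MeasurableSet N := measurableSet_lt hmeas measurable_const
  have hOm : ∀ i, MeasurableSet (Omi b V i) := measurableSet_Omi hVm b
  have hGm : ∀ i, MeasurableSet (Gam b V i) := measurableSet_Gam hVm b
  -- each Omi is inside the domain Iio 1 ×ˢ V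
  have hsubG : ∀ i, Omi b V i ⊆ Set.Iio (1 : ℝ) ×ˢ V := by
    intro i z hz
    cases i with
    | zero => exact ⟨hz.1.2, hz.2⟩
    | succ i =>
        obtain ⟨hzV, _, hzle⟩ := hz
        have h0v : 0 < z.2 := lt_of_le_of_lt ha (hV hzV).1
        have : (0 : ℝ) ≤ (i : ℝ) * z.2 * b⁻¹ :=
          mul_nonneg (mul_nonneg (Nat.cast_nonneg i) h0v.le) (inv_pos.mpr hb).le
        exact ⟨lt_of_le_of_lt (le_trans hzle (by linarith)) one_pos, hzV⟩
  have hx0null : ∀ᵐ z ∂μ, z.1 ≠ 0 := by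
    have hset : {z : ℝ × ℝ | z.1 = 0} = ({0} : Set ℝ) ×ˢ (Set.univ : Set ℝ) := by
      ext z; simp [Set.mem_prod, Prod.ext_iff, eq_comm]
    have : μ {z : ℝ × ℝ | z.1 = 0} = 0 := by
      rw [hset, hμdef, Measure.prod_prod]
      simp
    exact (measure_eq_zero_iff_ae_notMem.mp this)
  -- the key induction on strips
  have key : ∀ i, μ (N ∩ Gam b V i) = 0 := by
    intro i
    induction i with
    | zero =>
        have hG0 : Gam b V 0 = Set.Ioo (0 : ℝ) 1 ×ˢ V := by
          simp [Gam, Omi]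
        have hae : ∀ᵐ z ∂μ.restrict (Set.Ioo (0 : ℝ) 1 ×ˢ V), 0 ≤ ftil z := by
          have hsub0 : (Set.Ioo (0:ℝ) 1) ×ˢ V ⊆ (Set.Iio (1:ℝ)) ×ˢ V :=
            fun z hz => ⟨hz.1.2, hz.2⟩
          have h1 := ae_restrict_of_ae_restrict_of_subset hsub0 heqf
          have h2 := ae_restrict_mem (μ := μ) (((measurableSet_Ioo : MeasurableSet (Set.Ioo (0:ℝ) 1))).prod hVm)
          filter_upwards [h1, h2, hfnn] with z hz1 hz2 hz3
          rw [hz1 hz2.1.1]; exact hz3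
        have h0 : μ.restrict (Set.Ioo (0 : ℝ) 1 ×ˢ V) N = 0 := by
          have := ae_iff.mp hae
          simpa [hNdef, not_le] using this
        rw [hG0, ← Measure.restrict_apply' (measurableSet_Ioo.prod hVm)]
        exact h0
    | succ i ih =>
        -- B = bad set so far
        set B : Set (ℝ × ℝ) := N ∩ Gam b V i with hBdef
        have hBm : MeasurableSet B := hNm.inter (hGm i)
        -- (A) translation
        have hA : ∀ᵐ z ∂μ, (1 + z.1, z.2) ∉ B := by
          have hmp : MeasurePreserving (fun z : ℝ × ℝ => (1 + z.1, z.2)) μ μ := by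
            exact (measurePreserving_add_left (volume : Measure ℝ) 1).prod
              (MeasurePreserving.id ν)
          have h0 : μ ((fun z : ℝ × ℝ => (1 + z.1, z.2)) ⁻¹' B) = 0 := by
            rw [hmp.measure_preimage hBm.nullMeasurableSet]; exact ih
          exact measure_eq_zero_iff_ae_notMem.mp h0
        -- sections of B are Lebesgue-null
        have hsec : ∀ᵐ w ∂ν, volume {y : ℝ | (y, w) ∈ B} = 0 := by
          have hswap : (ν.prod (volume : Measure ℝ)) (Prod.swap ⁻¹' B) = 0 := by
            rw [Measure.measurePreserving_swap.measure_preimage hBm.nullMeasurableSet]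
            exact ih
          have := (Measure.measure_prod_null (hBm.preimage measurable_swap)).mp hswap
          filter_upwards [this] with w hw
          exact hw
        -- (B) the triple-product null set
        set S : Set (ℝ × ℝ × ℝ) :=
          {p : ℝ × ℝ × ℝ | p.1 ∈ V ∧ p.2.1 ∈ V ∧ (1 + p.2.2 * p.1 * p.2.1⁻¹, p.1) ∈ B}
          with hSdef
        have hSm : MeasurableSet S := by
          refine (measurable_fst hVm).inter ((measurable_snd.fst hVm).inter ?_)
          exact hBm.preimage
            ((measurable_const.add ((measurable_snd.snd.mul measurable_fst).mul
              measurable_snd.fst.inv)).prodMk measurable_fst)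
        have hτ : (ν.prod (ν.prod (volume : Measure ℝ))) S = 0 := by
          rw [Measure.measure_prod_null hSm]
          filter_upwards [hsec] with w hw
          show (ν.prod (volume : Measure ℝ)) (Prod.mk w ⁻¹' S) = 0
          by_cases hwV : w ∈ V
          · have h0w : 0 < w := lt_of_le_of_lt ha (hV hwV).1
            rw [Measure.measure_prod_null (hSm.preimage measurable_prodMk_left)]
            refine Filter.Eventually.of_forall fun v => ?_
            show volume (Prod.mk v ⁻¹' (Prod.mk w ⁻¹' S)) = 0
            by_cases hvV : v ∈ V
            · have h0v : 0 < v := lt_of_le_of_lt ha (hV hvV).1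
              have hset : Prod.mk v ⁻¹' (Prod.mk w ⁻¹' S)
                  = {x : ℝ | 1 + x * (w * v⁻¹) ∈ {y : ℝ | (y, w) ∈ B}} := by
                ext x
                simp [hSdef, hwV, hvV, mul_assoc]
              rw [hset]
              exact affine_null (ne_of_gt (mul_pos h0w (inv_pos.mpr h0v))) hw
            · have : Prod.mk v ⁻¹' (Prod.mk w ⁻¹' S) = ∅ := by
                ext x; simp [hSdef, hvV]
              simp [this]
          · have : Prod.mk w ⁻¹' S = ∅ := by
              ext x; simp [hSdef, hwV]
            simp [this]
        -- transfer to the (z, w) ordering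
        have hφ : MeasurePreserving
            ((Prod.map (id : ℝ → ℝ) (Prod.swap : ℝ × ℝ → ℝ × ℝ)) ∘ Prod.swap)
            (μ.prod ν) (ν.prod (ν.prod (volume : Measure ℝ))) := by
          exact ((MeasurePreserving.id ν).prod Measure.measurePreserving_swap).comp
            Measure.measurePreserving_swap
        have hpre : (μ.prod ν)
            (((Prod.map (id : ℝ → ℝ) (Prod.swap : ℝ × ℝ → ℝ × ℝ)) ∘ Prod.swap) ⁻¹' S) = 0 := by
          rw [hφ.measure_preimage hSm.nullMeasurableSet]; exact hτ
        have hB' : ∀ᵐ z ∂μ, ∀ᵐ w ∂ν,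
            ¬(w ∈ V ∧ z.2 ∈ V ∧ (1 + z.1 * w * z.2⁻¹, w) ∈ B) := by
          have hae := measure_eq_zero_iff_ae_notMem.mp hpre
          have := Measure.ae_ae_of_ae_prod hae
          filter_upwards [this] with z hz
          filter_upwards [hz] with w hw
          intro hcon
          exact hw ⟨hcon.1, hcon.2.1, hcon.2.2⟩
        -- a.e. nonnegativity on the new strip
        have hae : ∀ᵐ z ∂μ.restrict (Omi b V (i + 1)), 0 ≤ ftil z := by
          have h1 := ae_restrict_of_ae_restrict_of_subset (hsubG (i + 1)) hrec
          have h2 := ae_restrict_mem (μ := μ) (hOm (i + 1))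
          filter_upwards [h1, h2, ae_restrict_of_ae hx0null, ae_restrict_of_ae hA,
            ae_restrict_of_ae hB'] with z hz1 hz2 hz3 hz4 hz5
          obtain ⟨hzV, hzlt, hzle⟩ := hz2
          have h0v : 0 < z.2 := lt_of_le_of_lt ha (hV hzV).1
          have hx0 : z.1 ≤ 0 := le_trans hzle (neg_nonpos.mpr
            (mul_nonneg (mul_nonneg (Nat.cast_nonneg i) h0v.le) (inv_pos.mpr hb).le))
          have hxneg : z.1 < 0 := lt_of_le_of_ne hx0 hz3
          obtain ⟨hint, heq⟩ := hz1 hx0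
          rw [heq]
          apply integral_nonneg_of_ae
          have hael : ∀ᵐ (w : ℝ) ∂(ell p q k ν V z.2),
              0 ≤ ftil (1 + z.1 * w * z.2⁻¹, w) := by
            unfold ell
            rw [ae_add_measure_iff]
            constructor
            · -- withDensity part
              have hac : ((ν.restrict V).withDensity
                  (fun w => ENNReal.ofReal (p * w * z.2⁻¹ * k w z.2))) ≪ ν.restrict V :=
                withDensity_absolutelyContinuous _ _
              refine Filter.Eventually.filter_mono hac.ae_le ?_
              filter_upwards [ae_restrict_mem hVm, ae_restrict_of_ae hz5] with w hwV hw
              by_contra hcon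
              push_neg at hcon
              exact hw ⟨hwV, hzV, ⟨hcon, map_mem_Gam ha hb hV hzV hwV hzlt hxneg⟩⟩
            · -- dirac part
              refine Measure.ae_smul_measure ?_ _
              rw [ae_dirac_eq]
              show 0 ≤ ftil (1 + z.1 * z.2 * z.2⁻¹, z.2)
              have hv1 : z.1 * z.2 * z.2⁻¹ = z.1 := by
                field_simp
              rw [hv1]
              by_contra hcon
              push_neg at hcon
              have hmem : (1 + z.1, z.2) ∈ Gam b V i := by
                have := map_mem_Gam ha hb hV hzV hzV hzlt hxneg
                rwa [hv1] at this
              exact hz4 ⟨hcon, hmem⟩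
          filter_upwards [hael] with w hw
          exact hw
        have hstrip : μ (N ∩ Omi b V (i + 1)) = 0 := by
          have h0 : μ.restrict (Omi b V (i + 1)) N = 0 := by
            have := ae_iff.mp hae
            simpa [hNdef, not_le] using this
          rw [← Measure.restrict_apply' (hOm (i + 1))]
          exact h0
        have hGsucc : Gam b V (i + 1) = Gam b V i ∪ Omi b V (i + 1) := by
          rw [Gam, Finset.range_add_one]
          simp [Gam, Set.union_comm]
        rw [hGsucc, Set.inter_union_distrib_left]
        refine le_antisymm (le_trans (measure_union_le _ _) ?_) zero_le
        rw [ih, hstrip, add_zero]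
  -- conclusion: the domain is covered by the strips
  have hcover : (Set.Iio (1 : ℝ)) ×ˢ V ⊆ ⋃ i, Omi b V i := by
    rintro ⟨x, v⟩ ⟨hx, hv⟩
    have h0v : 0 < v := lt_of_le_of_lt ha (hV hv).1
    rcases lt_or_ge 0 x with h | h
    · exact Set.mem_iUnion.mpr ⟨0, ⟨⟨h, hx⟩, hv⟩⟩
    · exact Set.mem_iUnion.mpr ⟨_, mem_Omi_floor hb hv h0v h⟩
  have hfinal : μ.restrict ((Set.Iio (1 : ℝ)) ×ˢ V) N = 0 := by
    rw [Measure.restrict_apply hNm]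
    have hsub : N ∩ (Set.Iio (1 : ℝ)) ×ˢ V ⊆ ⋃ i, N ∩ Gam b V i := by
      intro z hz
      obtain ⟨i, hi⟩ := Set.mem_iUnion.mp (hcover hz.2)
      exact Set.mem_iUnion.mpr ⟨i, hz.1, Omi_subset_Gam b V (le_refl i) hi⟩
    refine le_antisymm (le_trans (measure_mono hsub) ?_) zero_le
    exact le_trans (measure_iUnion_le _) (by simp [key])
  rw [ae_iff]
  simpa [hNdef, not_le] using hfinal
end
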